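/- arXiv:2303.05341 — 2 statements merged into one kernel-verified Lean document; each statement's English description precedes it below -/
import Mathlib

section
/- Fix a > 2, λ > 0 and h ∈ ℝ, and define the SCAD-thresholding value f(h) by: f(h) = S(h, λ) if |h| ≤ 2λ; f(h) = S(h, aλ/(a−1))/(1 − 1/(a−1)) if 2λ < |h| ≤ aλ; and f(h) = h if |h| > aλ, where S(h, t) = sign(h)·(|h| − t)_+ is the soft-thresholding operator. Then f(h) is a global minimizer over β ∈ ℝ of the function β ↦ (1/2)(β − h)² + p_λ(|β|). -/
open intervalIntegral in
private lemma myIntegralId (lam u : ℝ) : ∫ x in lam..u, x = (u^2 - lam^2)/2 := integral_id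
open intervalIntegral in
private lemma myIntId (lam u : ℝ) : IntervalIntegrable (fun x:ℝ => x) MeasureTheory.volume lam u := intervalIntegrable_id



/-- The SCAD penalty derivative: for `u > 0`,
`p'_λ(u) = λ·[1(u ≤ λ) + ((aλ − u)₊/((a−1)λ))·1(u > λ)]`. -/
noncomputable def scadDeriv (a lam u : ℝ) : ℝ :=
  lam * ((if u ≤ lam then 1 else 0) +
    (max (a * lam - u) 0) / ((a - 1) * lam) * (if lam < u then 1 else 0))

/-- The SCAD penalty `p_λ(u) = ∫₀ᵘ p'_λ(t) dt`. -/
noncomputable def scadPenalty (a lam u : ℝ) : ℝ :=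
  ∫ t in (0 : ℝ)..u, scadDeriv a lam t

/-- Soft-thresholding operator `S(h, t) = sign(h)·(|h| − t)₊`. -/
noncomputable def softThresh (h t : ℝ) : ℝ :=
  Real.sign h * max (|h| - t) 0

/-- The SCAD-thresholding value: `S(h, λ)` if `|h| ≤ 2λ`;
`S(h, aλ/(a−1))/(1 − 1/(a−1))` if `2λ < |h| ≤ aλ`; and `h` if `|h| > aλ`. -/
noncomputable def scadThresh (a lam h : ℝ) : ℝ :=
  if |h| ≤ 2 * lam then softThresh h lam
  else if |h| ≤ a * lam then softThresh h (a * lam / (a - 1)) / (1 - 1 / (a - 1))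
  else h

lemma scadDeriv_eq (a lam : ℝ) (ha : 2 < a) (hlam : 0 < lam) (t : ℝ) :
    scadDeriv a lam t = min lam (max (a * lam - t) 0 / (a - 1)) := by
  have ha1 : (0:ℝ) < a - 1 := by linarith
  unfold scadDeriv
  by_cases h : t ≤ lam
  · rw [if_pos h, if_neg (not_lt.2 h)]
    have hmax : max (a * lam - t) 0 = a * lam - t := by
      rw [max_eq_left]; nlinarith
    rw [hmax, min_eq_left]
    · ring
    · rw [le_div_iff₀ ha1]; nlinarith
  · push_neg at h
    rw [if_neg (not_le.2 h), if_pos h, min_eq_right]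
    · field_simp; ring
    · rw [div_le_iff₀ ha1]
      rcases le_or_gt (a * lam - t) 0 with h2 | h2
      · rw [max_eq_right h2]; nlinarith
      · rw [max_eq_left h2.le]; nlinarith

lemma scadDeriv_cont (a lam : ℝ) (ha : 2 < a) (hlam : 0 < lam) :
    Continuous (scadDeriv a lam) := by
  have : scadDeriv a lam = fun t => min lam (max (a * lam - t) 0 / (a - 1)) := by
    funext t; exact scadDeriv_eq a lam ha hlam t
  rw [this]
  exact continuous_const.min (((continuous_const.sub continuous_id).max continuous_const).div_const _)

lemma penalty_low (a lam u : ℝ) (ha : 2 < a) (hlam : 0 < lam) (h0 : 0 ≤ u) (h1 : u ≤ lam) :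
    scadPenalty a lam u = lam * u := by
  unfold scadPenalty
  rw [intervalIntegral.integral_congr (g := fun _ => lam), intervalIntegral.integral_const]
  · simp; ring
  · intro t ht
    rw [Set.uIcc_of_le h0] at ht
    rw [scadDeriv_eq a lam ha hlam, min_eq_left]
    rw [le_div_iff₀ (by linarith)]
    have : a * lam - t ≤ max (a * lam - t) 0 := le_max_left _ _
    nlinarith [ht.1, ht.2]

lemma penalty_mid (a lam u : ℝ) (ha : 2 < a) (hlam : 0 < lam) (h1 : lam ≤ u) (h2 : u ≤ a * lam) :
    scadPenalty a lam u = (2 * a * lam * u - u ^ 2 - lam ^ 2) / (2 * (a - 1)) := by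
  have hint : ∀ x y : ℝ, IntervalIntegrable (scadDeriv a lam) MeasureTheory.volume x y :=
    fun x y => (scadDeriv_cont a lam ha hlam).intervalIntegrable x y
  have hsplit : scadPenalty a lam u =
      scadPenalty a lam lam + ∫ t in lam..u, scadDeriv a lam t := by
    unfold scadPenalty
    rw [intervalIntegral.integral_add_adjacent_intervals (hint 0 lam) (hint lam u)]
  have hfirst : scadPenalty a lam lam = lam * lam :=
    penalty_low a lam lam ha hlam hlam.le le_rfl
  have hsecond : (∫ t in lam..u, scadDeriv a lam t)
      = ∫ t in lam..u, (a * lam - t) / (a - 1) := by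
    apply intervalIntegral.integral_congr
    intro t ht
    rw [Set.uIcc_of_le h1] at ht
    have hm : max (a * lam - t) 0 = a * lam - t := by
      rw [max_eq_left]; nlinarith [ht.2]
    rw [scadDeriv_eq a lam ha hlam, hm, min_eq_right]
    rw [div_le_iff₀ (by linarith : (0:ℝ) < a - 1)]
    nlinarith [ht.1]
  have hlin : (∫ t in lam..u, (a * lam - t) / (a - 1))
      = ((u - lam) * (a * lam) - (u ^ 2 / 2 - lam ^ 2 / 2)) / (a - 1) := by
    rw [intervalIntegral.integral_div]
    congr 1
    rw [intervalIntegral.integral_sub intervalIntegrable_const (myIntId lam u),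
      intervalIntegral.integral_const, myIntegralId]
    simp [smul_eq_mul]
    ring
  rw [hsplit, hfirst, hsecond, hlin]
  have ha1 : a - 1 ≠ 0 := by linarith
  field_simp
  ring

lemma penalty_high (a lam u : ℝ) (ha : 2 < a) (hlam : 0 < lam) (h1 : a * lam ≤ u) :
    scadPenalty a lam u = lam ^ 2 * (a + 1) / 2 := by
  have hint : ∀ x y : ℝ, IntervalIntegrable (scadDeriv a lam) MeasureTheory.volume x y :=
    fun x y => (scadDeriv_cont a lam ha hlam).intervalIntegrable x y
  have hsplit : scadPenalty a lam u =
      scadPenalty a lam (a * lam) + ∫ t in (a*lam)..u, scadDeriv a lam t := by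
    unfold scadPenalty
    rw [intervalIntegral.integral_add_adjacent_intervals (hint 0 (a*lam)) (hint (a*lam) u)]
  have hfirst : scadPenalty a lam (a * lam) = lam ^ 2 * (a + 1) / 2 := by
    rw [penalty_mid a lam (a*lam) ha hlam (by nlinarith) le_rfl]
    have ha1 : a - 1 ≠ 0 := by linarith
    field_simp
    ring
  have hsecond : (∫ t in (a*lam)..u, scadDeriv a lam t) = 0 := by
    rw [intervalIntegral.integral_congr (g := fun _ => (0:ℝ))]
    · simp
    · intro t ht
      rw [Set.uIcc_of_le h1] at ht
      rw [scadDeriv_eq a lam ha hlam]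
      rw [max_eq_right (by linarith [ht.1])]
      simp [hlam.le]
  rw [hsplit, hfirst, hsecond, add_zero]

private lemma div_step {X Y N D : ℝ} (hD : 0 < D) (hEq : X - Y = N / D) (hN : 0 ≤ N) :
    Y ≤ X := by
  have := div_nonneg hN hD.le
  linarith

set_option maxHeartbeats 1000000 in
private lemma key (a lam h : ℝ) (ha : 2 < a) (hlam : 0 < lam) (hh : 0 ≤ h)
    (b : ℝ) (hb : 0 ≤ b) :
    (1 / 2) * (scadThresh a lam h - h) ^ 2 + scadPenalty a lam |scadThresh a lam h| ≤
      (1 / 2) * (b - h) ^ 2 + scadPenalty a lam b := by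
  have ha1 : (0:ℝ) < a - 1 := by linarith
  have ha2 : (0:ℝ) < a - 2 := by linarith
  have hne1 : a - 1 ≠ 0 := ne_of_gt ha1
  have hne2 : a - 2 ≠ 0 := ne_of_gt ha2
  have habs : |h| = h := abs_of_nonneg hh
  rcases le_or_gt h lam with hc1 | hc1
  · -- Case 1 : T = 0
    have hT : scadThresh a lam h = 0 := by
      rw [scadThresh, if_pos (by rw [habs]; linarith), softThresh, habs,
        max_eq_right (by linarith), mul_zero]
    rw [hT, abs_zero, penalty_low a lam 0 ha hlam le_rfl hlam.le, mul_zero]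
    rcases le_or_gt b lam with hb1 | hb1
    · rw [penalty_low a lam b ha hlam hb hb1]
      nlinarith [mul_nonneg hb (by linarith : (0:ℝ) ≤ lam - h), sq_nonneg b]
    rcases le_or_gt b (a * lam) with hb2 | hb2
    · rw [penalty_mid a lam b ha hlam hb1.le hb2]
      refine div_step (N := (a-2)*b^2 - 2*(a-1)*b*h + 2*a*lam*b - lam^2)
        (D := 2*(a-1)) (by linarith) (by field_simp; ring) ?_
      nlinarith [mul_nonneg (mul_nonneg ha2.le (by linarith : (0:ℝ) ≤ b - lam)) (by linarith : (0:ℝ) ≤ b + lam),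
        mul_nonneg hb (by linarith : (0:ℝ) ≤ lam - h), mul_nonneg hlam.le (by linarith : (0:ℝ) ≤ b - lam)]
    · rw [penalty_high a lam b ha hlam hb2.le]
      nlinarith [mul_nonneg hb (by nlinarith : (0:ℝ) ≤ b - 2*h), mul_nonneg ha2.le (sq_nonneg lam)]
  rcases le_or_gt h (2 * lam) with hc2 | hc2
  · -- Case 2 : T = h - lam
    have hT : scadThresh a lam h = h - lam := by
      rw [scadThresh, if_pos (by rw [habs]; linarith), softThresh, habs,
        Real.sign_of_pos (by linarith : (0:ℝ) < h), max_eq_left (by linarith), one_mul]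
    rw [hT, abs_of_nonneg (by linarith : (0:ℝ) ≤ h - lam),
      penalty_low a lam (h - lam) ha hlam (by linarith) (by linarith)]
    rcases le_or_gt b lam with hb1 | hb1
    · rw [penalty_low a lam b ha hlam hb hb1]
      nlinarith [sq_nonneg (b - h + lam)]
    rcases le_or_gt b (a * lam) with hb2 | hb2
    · rw [penalty_mid a lam b ha hlam hb1.le hb2]
      refine div_step (N := (a-2)*(b-lam)^2 + 2*(a-1)*(b-lam)*(2*lam-h) + (a-1)*(2*lam-h)^2)
        (D := 2*(a-1)) (by linarith) (by field_simp; ring) ?_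
      have n1 : (0:ℝ) ≤ (a-2)*(b-lam)^2 := mul_nonneg ha2.le (sq_nonneg _)
      have n2 : (0:ℝ) ≤ 2*(a-1)*(b-lam)*(2*lam-h) := by
        apply mul_nonneg (mul_nonneg (by linarith) (by linarith)) (by linarith)
      have n3 : (0:ℝ) ≤ (a-1)*(2*lam-h)^2 := mul_nonneg ha1.le (sq_nonneg _)
      linarith
    · rw [penalty_high a lam b ha hlam hb2.le]
      nlinarith [sq_nonneg (b - h), mul_nonneg hlam.le (by linarith : (0:ℝ) ≤ 2*lam - h),
        mul_nonneg ha2.le (sq_nonneg lam)]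
  rcases le_or_gt h (a * lam) with hc3 | hc3
  · -- Case 3 : T = ((a-1)h - a lam)/(a-2)
    have hfrac : a * lam / (a - 1) ≤ 2 * lam := by
      rw [div_le_iff₀ ha1]; nlinarith
    have hT : scadThresh a lam h = ((a-1)*h - a*lam)/(a-2) := by
      rw [scadThresh, if_neg (by rw [habs]; exact not_le.2 hc2),
        if_pos (by rw [habs]; exact hc3), softThresh, habs,
        Real.sign_of_pos (by linarith : (0:ℝ) < h),
        max_eq_left (by linarith), one_mul]
      rw [div_eq_div_iff (by rw [show (1:ℝ) - 1/(a-1) = (a-2)/(a-1) by field_simp; ring]; positivity) hne2]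
      field_simp
      ring
    have hTpos : (0:ℝ) < ((a-1)*h - a*lam)/(a-2) := div_pos (by nlinarith) ha2
    have hTlo : lam ≤ ((a-1)*h - a*lam)/(a-2) := by
      rw [le_div_iff₀ ha2]; nlinarith
    have hThi : ((a-1)*h - a*lam)/(a-2) ≤ a * lam := by
      rw [div_le_iff₀ ha2]; nlinarith
    rw [hT, abs_of_pos hTpos, penalty_mid a lam _ ha hlam hTlo hThi]
    rcases le_or_gt b lam with hb1 | hb1
    · rw [penalty_low a lam b ha hlam hb hb1]
      refine div_step (N := (a-2)*(lam-b)^2 + (a-1)*(h-2*lam)^2 + 2*(a-2)*(lam-b)*(h-2*lam))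
        (D := 2*(a-2)) (by linarith) (by field_simp; ring) ?_
      have n1 : (0:ℝ) ≤ (a-2)*(lam-b)^2 := mul_nonneg ha2.le (sq_nonneg _)
      have n2 : (0:ℝ) ≤ (a-1)*(h-2*lam)^2 := mul_nonneg ha1.le (sq_nonneg _)
      have n3 : (0:ℝ) ≤ 2*(a-2)*(lam-b)*(h-2*lam) := by
        apply mul_nonneg (mul_nonneg (by linarith) (by linarith)) (by linarith)
      linarith
    rcases le_or_gt b (a * lam) with hb2 | hb2
    · rw [penalty_mid a lam b ha hlam hb1.le hb2]
      refine div_step (N := ((a-2)*b - (a-1)*h + a*lam)^2)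
        (D := 2*(a-1)*(a-2)) (by positivity) (by field_simp; ring) (sq_nonneg _)
    · rw [penalty_high a lam b ha hlam hb2.le]
      refine div_step (N := (a-2)*(b-h)^2 + (h - a*lam)^2)
        (D := 2*(a-2)) (by linarith) (by field_simp; ring) ?_
      have n1 : (0:ℝ) ≤ (a-2)*(b-h)^2 := mul_nonneg ha2.le (sq_nonneg _)
      linarith [sq_nonneg (h - a*lam)]
  · -- Case 4 : T = h
    have hT : scadThresh a lam h = h := by
      rw [scadThresh, if_neg (by rw [habs]; exact not_le.2 hc2),
        if_neg (by rw [habs]; exact not_le.2 hc3)]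
    rw [hT, habs, penalty_high a lam h ha hlam hc3.le]
    rcases le_or_gt b lam with hb1 | hb1
    · rw [penalty_low a lam b ha hlam hb hb1]
      nlinarith [sq_nonneg (lam - b + (h - a*lam)),
        mul_nonneg (mul_nonneg ha2.le hlam.le) (by linarith : (0:ℝ) ≤ lam - b),
        mul_nonneg (mul_nonneg ha1.le hlam.le) (by linarith : (0:ℝ) ≤ h - a*lam),
        mul_nonneg (mul_nonneg ha1.le ha2.le) (sq_nonneg lam)]
    rcases le_or_gt b (a * lam) with hb2 | hb2
    · rw [penalty_mid a lam b ha hlam hb1.le hb2]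
      refine div_step (N := (a-2)*(b-h)^2 + (h - a*lam)*(h + a*lam - 2*b))
        (D := 2*(a-1)) (by linarith) (by field_simp; ring) ?_
      have n1 : (0:ℝ) ≤ (a-2)*(b-h)^2 := mul_nonneg ha2.le (sq_nonneg _)
      have n2 : (0:ℝ) ≤ (h - a*lam)*(h + a*lam - 2*b) := by
        apply mul_nonneg (by linarith) (by linarith)
      linarith
    · rw [penalty_high a lam b ha hlam hb2.le]
      nlinarith [sq_nonneg (b - h)]

private lemma scadThresh_neg (a lam h : ℝ) : scadThresh a lam (-h) = -scadThresh a lam h := by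
  simp only [scadThresh, softThresh, abs_neg, Real.sign_neg]
  split_ifs <;> ring

private lemma abs_step (h γ : ℝ) (hh : 0 ≤ h) : (|γ| - h) ^ 2 ≤ (γ - h) ^ 2 := by
  rcases abs_cases γ with ⟨e, _⟩ | ⟨e, hneg⟩ <;> rw [e] <;> nlinarith

/-- For `a > 2`, `λ > 0` and `h ∈ ℝ`, the SCAD-thresholding value is a global minimizer
over `β ∈ ℝ` of `β ↦ (1/2)(β − h)² + p_λ(|β|)`. -/
theorem scadThresh_is_min (a lam h : ℝ) (ha : 2 < a) (hlam : 0 < lam) :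
    ∀ β : ℝ,
      (1 / 2) * (scadThresh a lam h - h) ^ 2 + scadPenalty a lam |scadThresh a lam h| ≤
        (1 / 2) * (β - h) ^ 2 + scadPenalty a lam |β| := by
  intro β
  rcases le_or_gt 0 h with hh | hh
  · have h1 := key a lam h ha hlam hh |β| (abs_nonneg β)
    have h2 := abs_step h β hh
    linarith
  · have hnn : (0:ℝ) ≤ -h := by linarith
    have h1 := key a lam (-h) ha hlam hnn |β| (abs_nonneg β)
    rw [scadThresh_neg] at h1
    have e1 : (-scadThresh a lam h - -h) ^ 2 = (scadThresh a lam h - h) ^ 2 := by ring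
    rw [e1, abs_neg] at h1
    have h2 := abs_step (-h) (-β) hnn
    rw [abs_neg] at h2
    have e2 : (-β - -h) ^ 2 = (β - h) ^ 2 := by ring
    rw [e2] at h2
    linarith
end

section
/- Let p : [0,∞) → ℝ be differentiable with derivative p' Lipschitz continuous with constant b ≥ 0. Then for any s ≥ 1 and any β, β₀ ∈ ℝ^s, |Σ_{j=1}^s {p(|β_j|) − p(|β_{j0}|)}| ≤ √s · (max_{1≤j≤s} |p'(|β_{j0}|)|) · ‖β − β₀‖ + (b/2)·‖β − β₀‖², where ‖·‖ is the Euclidean norm. -/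
open Finset

open Set in
lemma scalar_taylor (p p' : ℝ → ℝ) (b : ℝ) (hb : 0 ≤ b)
    (hderiv : ∀ u ∈ Set.Ici (0 : ℝ), HasDerivWithinAt p (p' u) (Set.Ici 0) u)
    (hlip : ∀ u ∈ Set.Ici (0 : ℝ), ∀ v ∈ Set.Ici (0 : ℝ), |p' u - p' v| ≤ b * |u - v|)
    (u v : ℝ) (hu : 0 ≤ u) (hv : 0 ≤ v) :
    |p v - p u - p' u * (v - u)| ≤ b / 2 * (v - u) ^ 2 := by
  set d := v - u with hd
  set f : ℝ → ℝ := fun t => p (u + t * d) - p u - t * (p' u * d) with hfdef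
  set f' : ℝ → ℝ := fun t => p' (u + t * d) * d - p' u * d with hf'def
  have hmem : ∀ t ∈ Icc (0:ℝ) 1, 0 ≤ u + t * d := by
    intro t ht
    have h1 : u + t * d = (1 - t) * u + t * v := by rw [hd]; ring
    rw [h1]
    exact add_nonneg (mul_nonneg (by linarith [ht.2]) hu) (mul_nonneg ht.1 hv)
  have hline : ∀ t : ℝ, HasDerivAt (fun t : ℝ => u + t * d) d t := by
    intro t
    simpa using ((hasDerivAt_id t).mul_const d).const_add u
  have hcompIcc : ∀ t ∈ Icc (0:ℝ) 1,
      HasDerivWithinAt f (f' t) (Icc 0 1) t := by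
    intro t ht
    have hcomp : HasDerivWithinAt (fun t : ℝ => p (u + t * d)) (p' (u + t * d) * d)
        (Icc 0 1) t :=
      (hderiv _ (hmem t ht)).comp t ((hline t).hasDerivWithinAt) (fun x hx => hmem x hx)
    simpa [hfdef, hf'def, Pi.sub_def] using
      (hcomp.sub_const (p u)).sub ((hasDerivAt_mul_const (p' u * d)).hasDerivWithinAt)
  have hcont : ContinuousOn f (Icc 0 1) := fun t ht => (hcompIcc t ht).continuousWithinAt
  have hfderiv : ∀ t ∈ Ico (0:ℝ) 1, HasDerivWithinAt f (f' t) (Ici t) t := by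
    intro t ht
    refine (hcompIcc t ⟨ht.1, ht.2.le⟩).mono_of_mem_nhdsWithin ?_
    have : Ici t ∩ Iio 1 ⊆ Icc 0 1 := fun x hx => ⟨le_trans ht.1 hx.1, hx.2.le⟩
    exact Filter.mem_of_superset
      (inter_mem_nhdsWithin _ (Iio_mem_nhds ht.2)) (by simpa [Set.inter_comm] using this)
  have hB : ∀ t : ℝ, HasDerivAt (fun t => b / 2 * d ^ 2 * t ^ 2) (b * d ^ 2 * t) t := by
    intro t
    have := (hasDerivAt_pow 2 t).const_mul (b / 2 * d ^ 2)
    refine this.congr_deriv ?_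
    ring
  have bound : ∀ t ∈ Ico (0:ℝ) 1, ‖f' t‖ ≤ b * d ^ 2 * t := by
    intro t ht
    have h1 : f' t = (p' (u + t * d) - p' u) * d := by rw [hf'def]; ring
    rw [Real.norm_eq_abs, h1, abs_mul]
    have h2 := hlip _ (hmem t ⟨ht.1, ht.2.le⟩) u hu
    have h3 : |u + t * d - u| = t * |d| := by
      rw [show u + t * d - u = t * d by ring, abs_mul, abs_of_nonneg ht.1]
    calc |p' (u + t * d) - p' u| * |d| ≤ b * (t * |d|) * |d| :=
          mul_le_mul_of_nonneg_right (h3 ▸ h2) (abs_nonneg d)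
      _ = b * (|d| * |d|) * t := by ring
      _ = b * d ^ 2 * t := by rw [abs_mul_abs_self]; ring
  have key := image_norm_le_of_norm_deriv_right_le_deriv_boundary hcont hfderiv
    (by simp [hfdef]) hB bound (right_mem_Icc.2 zero_le_one)
  have h1 : f 1 = p v - p u - p' u * (v - u) := by simp [hfdef, hd]
  rw [Real.norm_eq_abs, h1] at key
  calc |p v - p u - p' u * (v - u)| ≤ b / 2 * d ^ 2 * 1 ^ 2 := key
    _ = b / 2 * (v - u) ^ 2 := by rw [hd]; ring

/-- If `p : [0,∞) → ℝ` is differentiable with derivative `p'` Lipschitz with constant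
`b ≥ 0`, then for any `s ≥ 1` and `β, β₀ ∈ ℝˢ`,
`|Σⱼ {p(|βⱼ|) − p(|β_{j0}|)}| ≤ √s · maxⱼ|p'(|β_{j0}|)| · ‖β − β₀‖ + (b/2)·‖β − β₀‖²`
in the Euclidean norm. -/
theorem penalty_taylor_bound (p p' : ℝ → ℝ) (b : ℝ) (hb : 0 ≤ b)
    (hderiv : ∀ u ∈ Set.Ici (0 : ℝ), HasDerivWithinAt p (p' u) (Set.Ici 0) u)
    (hlip : ∀ u ∈ Set.Ici (0 : ℝ), ∀ v ∈ Set.Ici (0 : ℝ), |p' u - p' v| ≤ b * |u - v|)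
    (s : ℕ) (hs : 1 ≤ s) (β β₀ : EuclideanSpace ℝ (Fin s)) :
    |∑ j, (p |β j| - p |β₀ j|)| ≤
      Real.sqrt s *
          (Finset.univ.sup' (Finset.univ_nonempty_iff.mpr (Fin.pos_iff_nonempty.mp hs))
            (fun j => |p' (|β₀ j|)|)) * ‖β - β₀‖ +
        (b / 2) * ‖β - β₀‖ ^ 2 := by

  have hne := Finset.univ_nonempty_iff.mpr (Fin.pos_iff_nonempty.mp hs)
  set M := Finset.univ.sup' hne (fun j => |p' (|β₀ j|)|) with hM
  have hM0 : 0 ≤ M := le_trans (abs_nonneg _) (Finset.le_sup' (fun j => |p' (|β₀ j|)|) (Finset.mem_univ hne.choose))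
  set c : Fin s → ℝ := fun j => |β j - β₀ j| with hc
  set a : Fin s → ℝ := fun j => abs (|β j| - |β₀ j|) with ha
  have hac : ∀ j, a j ≤ c j := fun j => abs_abs_sub_abs_le_abs_sub _ _
  have ha0 : ∀ j, 0 ≤ a j := fun j => abs_nonneg _
  -- pointwise bound
  have hpt : ∀ j, abs (p |β j| - p |β₀ j|) ≤ M * a j + b / 2 * (a j) ^ 2 := by
    intro j
    have h1 := scalar_taylor p p' b hb hderiv hlip (|β₀ j|) (|β j|) (abs_nonneg _) (abs_nonneg _)
    have h2 : abs (p |β j| - p |β₀ j|) ≤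
        |p' (|β₀ j|)| * a j + b / 2 * (a j) ^ 2 := by
      have := abs_sub_abs_le_abs_sub (p |β j| - p |β₀ j|) (p' (|β₀ j|) * (|β j| - |β₀ j|))
      have h3 : abs (p |β j| - p |β₀ j|) ≤
          abs (p (|β j|) - p (|β₀ j|) - p' (|β₀ j|) * (|β j| - |β₀ j|)) +
            abs (p' (|β₀ j|) * (|β j| - |β₀ j|)) := by
        have := abs_sub (p |β j| - p |β₀ j| - p' (|β₀ j|) * (|β j| - |β₀ j|))
          (-(p' (|β₀ j|) * (|β j| - |β₀ j|)))
        calc abs (p (|β j|) - p (|β₀ j|)) =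
            |(p (|β j|) - p (|β₀ j|) - p' (|β₀ j|) * (|β j| - |β₀ j|)) +
              p' (|β₀ j|) * (|β j| - |β₀ j|)| := by ring_nf
          _ ≤ _ := abs_add_le _ _
      calc abs (p (|β j|) - p (|β₀ j|)) ≤ _ := h3
        _ ≤ b / 2 * (|β j| - |β₀ j|) ^ 2 + |p' (|β₀ j|)| * a j := by
            rw [abs_mul]; exact add_le_add h1 le_rfl
        _ = |p' (|β₀ j|)| * a j + b / 2 * (a j) ^ 2 := by rw [ha, sq_abs]; ring
    refine h2.trans (add_le_add ?_ le_rfl)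
    exact mul_le_mul_of_nonneg_right (Finset.le_sup' (fun j => |p' (|β₀ j|)|) (Finset.mem_univ j)) (ha0 j)
  -- norm facts
  have hnorm : ‖β - β₀‖ = Real.sqrt (∑ j, (c j) ^ 2) := by
    simp [EuclideanSpace.norm_eq, hc, Real.norm_eq_abs, sq_abs]
  have hsum_sq : ∑ j, (c j) ^ 2 = ‖β - β₀‖ ^ 2 := by
    rw [hnorm, Real.sq_sqrt (Finset.sum_nonneg fun j _ => sq_nonneg _)]
  have hsum_a_sq : ∑ j, (a j) ^ 2 ≤ ‖β - β₀‖ ^ 2 := by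
    rw [← hsum_sq]
    exact Finset.sum_le_sum fun j _ => pow_le_pow_left₀ (ha0 j) (hac j) 2
  have hsum_a : ∑ j, a j ≤ Real.sqrt s * ‖β - β₀‖ := by
    have h1 : (∑ j, a j) ^ 2 ≤ s * ∑ j, (a j) ^ 2 := by
      simpa using sq_sum_le_card_mul_sum_sq (s := Finset.univ) (f := a)
    have h2 : (∑ j, a j) ^ 2 ≤ (s : ℝ) * ‖β - β₀‖ ^ 2 :=
      h1.trans (mul_le_mul_of_nonneg_left hsum_a_sq (Nat.cast_nonneg s))
    have h3 : ∑ j, a j ≤ Real.sqrt ((s : ℝ) * ‖β - β₀‖ ^ 2) := by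
      rw [← Real.sqrt_sq (Finset.sum_nonneg fun j _ => ha0 j)]
      exact Real.sqrt_le_sqrt h2
    rwa [Real.sqrt_mul (Nat.cast_nonneg s), Real.sqrt_sq (norm_nonneg _)] at h3
  calc |∑ j, (p |β j| - p |β₀ j|)| ≤ ∑ j, abs (p |β j| - p |β₀ j|) :=
        Finset.abs_sum_le_sum_abs _ _
    _ ≤ ∑ j, (M * a j + b / 2 * (a j) ^ 2) := Finset.sum_le_sum fun j _ => hpt j
    _ = M * (∑ j, a j) + b / 2 * (∑ j, (a j) ^ 2) := by
        rw [Finset.sum_add_distrib, Finset.mul_sum, Finset.mul_sum]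
    _ ≤ M * (Real.sqrt s * ‖β - β₀‖) + b / 2 * ‖β - β₀‖ ^ 2 :=
        add_le_add (mul_le_mul_of_nonneg_left hsum_a hM0)
          (mul_le_mul_of_nonneg_left hsum_a_sq (by positivity))
    _ = Real.sqrt s * M * ‖β - β₀‖ + b / 2 * ‖β - β₀‖ ^ 2 := by ring
end
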